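/- Let m > 1 and let a, b, c be distinct rational numbers. In the function field ℚ̄(X, Y) of the affine curve (Y − a)(Y − b) = X^m (Y − c), if (Y − a)^i (Y − c)^j = f^m for some f ∈ ℚ̄(X,Y) and integers 0 ≤ i, j < m, then i = j = 0. -/

import Mathlib

open Polynomial

private lemma stmt15_rm_pow {R : Type*} [CommRing R] [IsDomain R] {p : R[X]} (hp : p ≠ 0)
    (x : R) (n : ℕ) : rootMultiplicity x (p ^ n) = n * rootMultiplicity x p := by
  induction n with
  | zero => simp [rootMultiplicity_eq_zero (by simp [IsRoot] : ¬ IsRoot (1 : R[X]) x)]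
  | succ n ih =>
    rw [pow_succ, rootMultiplicity_mul (mul_ne_zero (pow_ne_zero _ hp) hp), ih]
    ring

private lemma stmt15_div_helper {m s x y : ℕ} (hs : s < m) (h : s + m * x = m * y) : s = 0 := by
  have h' : (s : ℤ) + m * x = m * y := by exact_mod_cast h
  have hd : (m : ℤ) ∣ (s : ℤ) := ⟨(y : ℤ) - x, by ring_nf; linarith⟩
  exact Nat.eq_zero_of_dvd_of_lt (Int.natCast_dvd_natCast.mp hd) hs

private lemma stmt15_rm {A : Type*} [Field A] {α β γ : A}
    {p q : A[X]} (hp : p ≠ 0) (hq : q ≠ 0) {i j t m : ℕ}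
    (hpoly : (X - C α) ^ i * (X - C γ) ^ j * ((X - C α) * (X - C β)) ^ t * q ^ m
      = p ^ m * (X - C γ) ^ t) (r : A) {v1 v2 v3 : ℕ}
    (h1 : rootMultiplicity r (X - C α) = v1)
    (h2 : rootMultiplicity r (X - C β) = v2)
    (h3 : rootMultiplicity r (X - C γ) = v3) :
    i * v1 + j * v3 + t * (v1 + v2) + m * rootMultiplicity r q
      = m * rootMultiplicity r p + t * v3 := by
  have na : (X - C α) ≠ (0 : A[X]) := X_sub_C_ne_zero α
  have nb : (X - C β) ≠ (0 : A[X]) := X_sub_C_ne_zero β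
  have nc : (X - C γ) ≠ (0 : A[X]) := X_sub_C_ne_zero γ
  have H := congrArg (rootMultiplicity r) hpoly
  rw [rootMultiplicity_mul (mul_ne_zero (mul_ne_zero (mul_ne_zero (pow_ne_zero i na)
        (pow_ne_zero j nc)) (pow_ne_zero t (mul_ne_zero na nb))) (pow_ne_zero m hq)),
      rootMultiplicity_mul (mul_ne_zero (mul_ne_zero (pow_ne_zero i na) (pow_ne_zero j nc))
        (pow_ne_zero t (mul_ne_zero na nb))),
      rootMultiplicity_mul (mul_ne_zero (pow_ne_zero i na) (pow_ne_zero j nc)),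
      rootMultiplicity_mul (mul_ne_zero (pow_ne_zero m hp) (pow_ne_zero t nc)),
      stmt15_rm_pow na, stmt15_rm_pow nc, stmt15_rm_pow (mul_ne_zero na nb),
      rootMultiplicity_mul (mul_ne_zero na nb),
      stmt15_rm_pow hq, stmt15_rm_pow hp, stmt15_rm_pow nc, h1, h2, h3] at H
  omega

private lemma stmt15_kummer_aux {K F : Type*} [Field K] [Field F] [Algebra K F]
    {m : ℕ} (hm : 1 < m) {ζ : K} (hζ : IsPrimitiveRoot ζ m)
    {g : K} {X : F} (hXm : X ^ m = algebraMap K F g)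
    (hgen : Algebra.adjoin K {X} = ⊤) (hdeg : Module.finrank K F = m)
    {W : K} (hW : W ≠ 0) {f : F} (hf : algebraMap K F W = f ^ m) :
    ∃ (u : K) (t : ℕ), t < m ∧ W * g ^ t = u ^ m := by
  haveI : NeZero m := ⟨by omega⟩
  have hm0 : m ≠ 0 := by omega
  have hinj : Function.Injective (algebraMap K F) := (algebraMap K F).injective
  have haev : (Polynomial.aeval X) (Polynomial.X ^ m - Polynomial.C g) = 0 := by
    simp [hXm]
  have hint : IsIntegral K X := ⟨_, monic_X_pow_sub_C g hm0, haev⟩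
  have htop : IntermediateField.adjoin K {X} = ⊤ :=
    IntermediateField.adjoin_eq_top_of_algebra (hS := hgen)
  let eqv : (IntermediateField.adjoin K {X}) ≃ₐ[K] F :=
    (IntermediateField.equivOfEq htop).trans IntermediateField.topEquiv
  have hndeg : (minpoly K X).natDegree = m := by
    have h1 : Module.finrank K (IntermediateField.adjoin K {X}) = Module.finrank K F :=
      eqv.toLinearEquiv.finrank_eq
    rw [← IntermediateField.adjoin.finrank hint, h1, hdeg]
  have hmp : minpoly K X = Polynomial.X ^ m - Polynomial.C g := by
    obtain ⟨q, hq⟩ := minpoly.dvd K X haev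
    have hPm : (Polynomial.X ^ m - Polynomial.C g).Monic := monic_X_pow_sub_C g hm0
    have hmon := minpoly.monic hint
    have hqm : q.Monic := hmon.of_mul_monic_left (hq ▸ hPm)
    have hdq : q.natDegree = 0 := by
      have h3 : (Polynomial.X ^ m - Polynomial.C g).natDegree = m := natDegree_X_pow_sub_C
      have h2 : (minpoly K X * q).natDegree = (minpoly K X).natDegree + q.natDegree :=
        hmon.natDegree_mul hqm
      rw [← hq, h3, hndeg] at h2
      omega
    rw [hq, hqm.natDegree_eq_zero.mp hdq, mul_one]
  let pb : PowerBasis K F := (IntermediateField.adjoin.powerBasis hint).map eqv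
  have hpbgen : pb.gen = X := by
    show eqv (IntermediateField.AdjoinSimple.gen K X) = X
    rfl
  have hpbdim : pb.dim = m := by
    show (minpoly K X).natDegree = m
    exact hndeg
  set ζF := algebraMap K F ζ with hζF
  have hζroot : (Polynomial.aeval (ζF * X)) (minpoly K pb.gen) = 0 := by
    rw [hpbgen, hmp, map_sub, aeval_C, map_pow, aeval_X, mul_pow, hXm, hζF, ← map_pow,
      hζ.pow_eq_one, map_one, one_mul, sub_self]
  let σ : F →ₐ[K] F := pb.lift (ζF * X) hζroot
  have hσX : σ X = ζF * X := by rw [← hpbgen]; exact pb.lift_gen _ _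
  have hf0 : f ≠ 0 := by
    intro h
    rw [h, zero_pow hm0] at hf
    exact hW (hinj (by simpa using hf))
  have hσfm : (σ f) ^ m = f ^ m := by
    rw [← map_pow, ← hf, σ.commutes, hf]
  have hω : (σ f * f⁻¹) ^ m = 1 := by
    rw [mul_pow, hσfm, inv_pow, mul_inv_cancel₀ (pow_ne_zero _ hf0)]
  have hζFprim : IsPrimitiveRoot ζF m := hζ.map_of_injective hinj
  obtain ⟨k, hkm, hk⟩ := hζFprim.eq_pow_of_pow_eq_one hω
  have hσf : σ f = ζF ^ k * f := by
    rw [hk, inv_mul_cancel_right₀ hf0]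
  set t := (m - k) % m with ht
  have htm : t < m := Nat.mod_lt _ (by omega)
  have hkt : m ∣ k + t := by
    rcases Nat.eq_zero_or_pos k with h0 | h0
    · simp [ht, h0]
    · have h1 : t = m - k := Nat.mod_eq_of_lt (by omega)
      exact ⟨1, by omega⟩
  have hζkt : ζF ^ (k + t) = 1 := (hζFprim.pow_eq_one_iff_dvd _).mpr hkt
  set E := f * X ^ t with hE
  have hσE : σ E = E := by
    calc σ E = (ζF ^ k * f) * ((ζF * X) ^ t) := by rw [hE, map_mul, map_pow, hσX, hσf]
      _ = ζF ^ (k + t) * (f * X ^ t) := by rw [mul_pow, pow_add]; ring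
      _ = E := by rw [hζkt, one_mul, hE]
  set u : Fin pb.dim → K := fun s => pb.basis.repr E s with hu
  have hErep : E = ∑ s, u s • pb.basis s := (pb.basis.sum_repr E).symm
  have hσb : ∀ s : Fin pb.dim, σ (pb.basis s) = (ζ ^ (s : ℕ)) • pb.basis s := by
    intro s
    rw [pb.basis_eq_pow, hpbgen, map_pow, hσX, mul_pow, Algebra.smul_def, map_pow]
  have hσE2 : σ E = ∑ s : Fin pb.dim, (ζ ^ (s : ℕ) * u s) • pb.basis s := by
    conv_lhs => rw [hErep]
    rw [map_sum]
    refine Finset.sum_congr rfl fun s _ => ?_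
    rw [map_smul, hσb, smul_smul, mul_comm]
  have hsumE : (∑ s' : Fin pb.dim, (ζ ^ (s' : ℕ) * u s') • pb.basis s') = E :=
    hσE2.symm.trans hσE
  have hcoord : ∀ s : Fin pb.dim, ζ ^ (s : ℕ) * u s = u s := by
    intro s
    have h4 : ⇑(pb.basis.repr E) = fun s' : Fin pb.dim => ζ ^ (s' : ℕ) * u s' := by
      conv_lhs => rw [← hsumE]
      exact pb.basis.repr_sum_self _
    exact (congrFun h4 s).symm
  have hzero : ∀ s : Fin pb.dim, (s : ℕ) ≠ 0 → u s = 0 := by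
    intro s hs
    have hne : ζ ^ (s : ℕ) ≠ 1 := hζ.pow_ne_one_of_pos_of_lt hs
      (hpbdim ▸ s.isLt)
    have := hcoord s
    by_contra h
    exact hne (by field_simp at this; tauto)
  have hdim0 : 0 < pb.dim := by omega
  set z : Fin pb.dim := ⟨0, hdim0⟩ with hz
  have hEu : E = algebraMap K F (u z) := by
    rw [hErep]
    rw [Finset.sum_eq_single z]
    · rw [pb.basis_eq_pow, hz]
      simp [Algebra.smul_def]
    · intro s _ hsz
      have : (s : ℕ) ≠ 0 := by
        intro h0
        exact hsz (Fin.ext h0)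
      rw [hzero s this, zero_smul]
    · intro h
      exact absurd (Finset.mem_univ z) h
  refine ⟨u z, t, htm, hinj ?_⟩
  rw [map_mul, map_pow, map_pow, ← hXm, hf, ← hEu, hE]
  ring

/-- Let `m > 1` and `a, b, c ∈ ℚ` be distinct.  Model the function field
`F = ℚ̄(X, Y)` of the affine curve `(Y−a)(Y−b) = X^m(Y−c)` as a degree-`m` extension of
`ℚ̄(Y)` generated by `X` with `X^m = (Y−a)(Y−b)/(Y−c)`.  If
`(Y−a)^i (Y−c)^j = f^m` with `f ∈ F` and `0 ≤ i, j < m`, then `i = j = 0`. -/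
theorem stmt_15 (m : ℕ) (hm : 1 < m) (a b c : ℚ)
    (hab : a ≠ b) (hac : a ≠ c) (hbc : b ≠ c)
    (F : Type*) [Field F] [Algebra (RatFunc (AlgebraicClosure ℚ)) F]
    (X : F)
    (hXm : X ^ m = algebraMap (RatFunc (AlgebraicClosure ℚ)) F
      (((RatFunc.X - RatFunc.C (algebraMap ℚ (AlgebraicClosure ℚ) a)) *
        (RatFunc.X - RatFunc.C (algebraMap ℚ (AlgebraicClosure ℚ) b))) /
        (RatFunc.X - RatFunc.C (algebraMap ℚ (AlgebraicClosure ℚ) c))))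
    (hgenF : Algebra.adjoin (RatFunc (AlgebraicClosure ℚ)) {X} = ⊤)
    (hdeg : Module.finrank (RatFunc (AlgebraicClosure ℚ)) F = m)
    (i j : ℕ) (hi : i < m) (hj : j < m) (f : F)
    (hf : (algebraMap (RatFunc (AlgebraicClosure ℚ)) F
        (RatFunc.X - RatFunc.C (algebraMap ℚ (AlgebraicClosure ℚ) a))) ^ i *
      (algebraMap (RatFunc (AlgebraicClosure ℚ)) F
        (RatFunc.X - RatFunc.C (algebraMap ℚ (AlgebraicClosure ℚ) c))) ^ j = f ^ m) :
    i = 0 ∧ j = 0 := by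
  set A := AlgebraicClosure ℚ with hA
  set α := algebraMap ℚ A a with hαdef
  set β := algebraMap ℚ A b with hβdef
  set γ := algebraMap ℚ A c with hγdef
  have hinjQ : Function.Injective (algebraMap ℚ A) := (algebraMap ℚ A).injective
  have hαβ : α ≠ β := fun h => hab (hinjQ h)
  have hαγ : α ≠ γ := fun h => hac (hinjQ h)
  have hβγ : β ≠ γ := fun h => hbc (hinjQ h)
  obtain ⟨ζ, hζ⟩ : ∃ ζ : A, IsPrimitiveRoot ζ m := by
    obtain ⟨r, hr⟩ := IsAlgClosed.exists_root (Polynomial.cyclotomic m A)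
      (Polynomial.degree_cyclotomic_pos m A (by omega)).ne'
    exact ⟨r, (Polynomial.isRoot_cyclotomic_iff_charZero (by omega)).mp hr⟩
  have hζK : IsPrimitiveRoot (RatFunc.C ζ) m := hζ.map_of_injective (RatFunc.C (K := A)).injective
  have himg : ∀ r : A, RatFunc.X - RatFunc.C r =
      algebraMap (Polynomial A) (RatFunc A) (Polynomial.X - Polynomial.C r) := by
    intro r
    rw [map_sub, RatFunc.algebraMap_X, RatFunc.algebraMap_C]
  have hne : ∀ r : A, RatFunc.X - RatFunc.C r ≠ 0 := by
    intro r
    rw [himg r]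
    exact (map_ne_zero_iff _ (RatFunc.algebraMap_injective A)).mpr (Polynomial.X_sub_C_ne_zero r)
  set xa : RatFunc A := RatFunc.X - RatFunc.C α with hxa
  set xb : RatFunc A := RatFunc.X - RatFunc.C β with hxb
  set xc : RatFunc A := RatFunc.X - RatFunc.C γ with hxc
  have hxane : xa ≠ 0 := hne α
  have hxbne : xb ≠ 0 := hne β
  have hxcne : xc ≠ 0 := hne γ
  set g : RatFunc A := (xa * xb) / xc with hgdef
  set W : RatFunc A := xa ^ i * xc ^ j with hWdef
  have hWne : W ≠ 0 := mul_ne_zero (pow_ne_zero _ hxane) (pow_ne_zero _ hxcne)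
  have hgne : g ≠ 0 := div_ne_zero (mul_ne_zero hxane hxbne) hxcne
  have hfW : algebraMap (RatFunc A) F W = f ^ m := by
    rw [hWdef, map_mul, map_pow, map_pow]
    exact hf
  obtain ⟨u, t, htm, hWg⟩ := stmt15_kummer_aux hm hζK hXm hgenF hdeg hWne hfW
  have hu0 : u ≠ 0 := by
    intro h
    rw [h, zero_pow (show m ≠ 0 by omega)] at hWg
    exact (mul_ne_zero hWne (pow_ne_zero _ hgne)) hWg
  have hpne : u.num ≠ 0 := RatFunc.num_ne_zero hu0
  have hqne : u.denom ≠ 0 := u.denom_ne_zero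
  have hPQ : algebraMap (Polynomial A) (RatFunc A) u.num /
      algebraMap (Polynomial A) (RatFunc A) u.denom = u := RatFunc.num_div_denom u
  have hQ0 : algebraMap (Polynomial A) (RatFunc A) u.denom ≠ 0 :=
    (map_ne_zero_iff _ (RatFunc.algebraMap_injective A)).mpr hqne
  have hWg2 : xa ^ i * xc ^ j * (xa * xb) ^ t = u ^ m * xc ^ t := by
    rw [hWdef, hgdef] at hWg
    rw [← hWg, div_pow, ← mul_div_assoc, div_mul_cancel₀ _ (pow_ne_zero _ hxcne)]
  have huQ : u * algebraMap (Polynomial A) (RatFunc A) u.denom =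
      algebraMap (Polynomial A) (RatFunc A) u.num := by
    nth_rewrite 1 [← hPQ]
    exact div_mul_cancel₀ _ hQ0
  have hKeq : xa ^ i * xc ^ j * (xa * xb) ^ t *
        (algebraMap (Polynomial A) (RatFunc A) u.denom) ^ m
      = (algebraMap (Polynomial A) (RatFunc A) u.num) ^ m * xc ^ t := by
    calc xa ^ i * xc ^ j * (xa * xb) ^ t * (algebraMap (Polynomial A) (RatFunc A) u.denom) ^ m
        = (u ^ m * xc ^ t) * (algebraMap (Polynomial A) (RatFunc A) u.denom) ^ m := by
          rw [hWg2]
      _ = (u * algebraMap (Polynomial A) (RatFunc A) u.denom) ^ m * xc ^ t := by ring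
      _ = (algebraMap (Polynomial A) (RatFunc A) u.num) ^ m * xc ^ t := by rw [huQ]
  have hpoly : (Polynomial.X - Polynomial.C α) ^ i * (Polynomial.X - Polynomial.C γ) ^ j *
      ((Polynomial.X - Polynomial.C α) * (Polynomial.X - Polynomial.C β)) ^ t * u.denom ^ m
      = u.num ^ m * (Polynomial.X - Polynomial.C γ) ^ t := by
    apply RatFunc.algebraMap_injective A
    rw [hxa, hxb, hxc, himg α, himg β, himg γ] at hKeq
    simpa only [map_mul, map_pow] using hKeq
  have rm0 : ∀ r s : A, r ≠ s → rootMultiplicity r (Polynomial.X - Polynomial.C s) = 0 := by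
    intro r s hrs
    exact rootMultiplicity_eq_zero (by simp [IsRoot, sub_eq_zero, hrs])
  have rm1 : ∀ r : A, rootMultiplicity r (Polynomial.X - Polynomial.C r) = 1 := fun r =>
    rootMultiplicity_X_sub_C_self
  have eβ := stmt15_rm hpne hqne hpoly β (rm0 β α hαβ.symm) (rm1 β) (rm0 β γ hβγ)
  have eα := stmt15_rm hpne hqne hpoly α (rm1 α) (rm0 α β hαβ) (rm0 α γ hαγ)
  have eγ := stmt15_rm hpne hqne hpoly γ (rm0 γ α hαγ.symm) (rm0 γ β hβγ.symm) (rm1 γ)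
  simp only [Nat.mul_zero, Nat.mul_one, Nat.zero_add, Nat.add_zero, Nat.zero_mul,
    Nat.one_mul] at eα eβ eγ
  have ht0 : t = 0 := stmt15_div_helper htm eβ
  subst ht0
  simp only [Nat.add_zero, Nat.zero_add, Nat.mul_zero] at eα eγ
  exact ⟨stmt15_div_helper hi eα, stmt15_div_helper hj eγ⟩
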